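/- arXiv:1801.10210 — 2 statements merged into one kernel-verified Lean document; each statement's English description precedes it below -/
import Mathlib

section
/- Fix a ∈ ℝ^D and a nondegenerate simplex T ⊂ ℝ^D. Then the functions e_{a,n}(x) := ( Σ_{j=0}^D s_j(x) exp(a · x_j / n) )^n converge uniformly on T to exp(a · x) as n → ∞; moreover there exists a constant K such that sup_{x∈T} |e_{a,n}(x) − exp(a·x)| ≤ (K/n + O(1/n²)) · sup_{x∈T} exp(a·x). -/
open Finset

/-- Standard dot product on `ℝ^D`. -/
noncomputable def dotp {D : ℕ} (a y : Fin D → ℝ) : ℝ := ∑ i, a i * y i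

/-- The degree-`n` Bernstein–Bézier approximant of `f` on the simplex with vertices
`x₀, …, x_D`, expressed via the barycentric coordinate functions `s`:
`B_n(f; y) = ∑_{|k| = n} f(∑ⱼ (kⱼ/n) xⱼ) (n choose k₀,…,k_D) ∏ⱼ sⱼ(y)^{kⱼ}`. -/
noncomputable def bezier {D : ℕ} (x : Fin (D + 1) → (Fin D → ℝ))
    (s : (Fin D → ℝ) → Fin (D + 1) → ℝ) (f : (Fin D → ℝ) → ℝ) (n : ℕ)
    (y : Fin D → ℝ) : ℝ :=
  ∑ k ∈ Finset.piAntidiag (Finset.univ : Finset (Fin (D + 1))) n,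
    f (∑ j, ((k j : ℝ) / n) • x j) *
      ((Nat.multinomial Finset.univ k : ℝ) * ∏ j, (s y j) ^ (k j))

lemma exp_quad {t : ℝ} (ht : |t| ≤ 1) : Real.exp t ≤ 1 + t + (3/4) * t^2 := by
  have h := Real.exp_bound ht (by norm_num : 0 < 2)
  have hsum : ∑ m ∈ range 2, t ^ m / m.factorial = 1 + t := by
    simp [Finset.sum_range_succ]
  rw [hsum] at h
  rw [abs_le] at h
  have h2 := h.2
  have h3 : |t| ^ 2 = t ^ 2 := sq_abs t
  rw [h3] at h2
  norm_num [Nat.factorial] at h2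
  nlinarith

lemma exp_sub_one_le {t : ℝ} : Real.exp t - 1 ≤ t * Real.exp t := by
  have h2 : (-t) + 1 ≤ Real.exp (-t) := Real.add_one_le_exp _
  have h3 := mul_le_mul_of_nonneg_right h2 (Real.exp_pos t).le
  rw [← Real.exp_add] at h3
  simp at h3
  nlinarith [Real.exp_pos t]

lemma key {ι : Type*} [Fintype ι] [Nonempty ι] (s c : ι → ℝ) (M : ℝ)
    (hs0 : ∀ j, 0 ≤ s j) (hs1 : ∑ j, s j = 1) (hM : ∀ j, |c j| ≤ M)
    (n : ℕ) (hn1 : 1 ≤ n) (hn : 2 * M ≤ n) :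
    |(∑ j, s j * Real.exp (c j / n)) ^ n - Real.exp (∑ j, s j * c j)| ≤
      (3 * M ^ 2 * Real.exp (3 * M ^ 2)) / n * Real.exp (∑ j, s j * c j) := by
  have M0 : 0 ≤ M := le_trans (abs_nonneg _) (hM (Classical.arbitrary ι))
  have npos : (0:ℝ) < n := by exact_mod_cast hn1
  have hn' : (1:ℝ) ≤ n := by exact_mod_cast hn1
  set m := ∑ j, s j * c j with hm_def
  have hm : |m| ≤ M := by
    calc |m| ≤ ∑ j, |s j * c j| := Finset.abs_sum_le_sum_abs _ _
    _ ≤ ∑ j, s j * M := by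
        refine Finset.sum_le_sum fun j _ => ?_
        rw [abs_mul, abs_of_nonneg (hs0 j)]
        exact mul_le_mul_of_nonneg_left (hM j) (hs0 j)
    _ = M := by rw [← Finset.sum_mul, hs1, one_mul]
  have hu : ∀ j, |c j - m| ≤ 2 * M := fun j => by
    calc |c j - m| ≤ |c j| + |m| := abs_sub _ _
    _ ≤ 2 * M := by linarith [hM j, hm]
  have hsu : ∑ j, s j * (c j - m) = 0 := by
    simp only [mul_sub]
    rw [Finset.sum_sub_distrib, ← Finset.sum_mul, hs1, one_mul, ← hm_def, sub_self]
  have h0 : ∑ j, s j * ((c j - m) / n) = 0 := by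
    have : ∑ j, s j * ((c j - m) / n) = (∑ j, s j * (c j - m)) / n := by
      rw [Finset.sum_div]
      exact Finset.sum_congr rfl fun j _ => (mul_div_assoc _ _ _).symm
    rw [this, hsu, zero_div]
  set B := 3 * M ^ 2 with hB
  have B0 : 0 ≤ B := by positivity
  set Q := ∑ j, s j * Real.exp ((c j - m) / n) with hQ
  have hS : ∑ j, s j * Real.exp (c j / n) = Real.exp (m / n) * Q := by
    rw [hQ, Finset.mul_sum]
    refine Finset.sum_congr rfl fun j _ => ?_
    rw [show c j / (n:ℝ) = m / n + (c j - m) / n by ring, Real.exp_add]; ring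
  have hQ1 : (1:ℝ) ≤ Q := by
    have : ∑ j, s j * (1 + (c j - m) / n) = 1 := by
      simp only [mul_add, mul_one]
      rw [Finset.sum_add_distrib, hs1, h0, add_zero]
    rw [← this]
    refine Finset.sum_le_sum fun j _ => ?_
    refine mul_le_mul_of_nonneg_left ?_ (hs0 j)
    linarith [Real.add_one_le_exp ((c j - m) / n)]
  have hQ2 : Q ≤ 1 + B / n ^ 2 := by
    have hterm : ∀ j, Real.exp ((c j - m) / n) ≤ 1 + (c j - m) / n + B / n ^ 2 := by
      intro j
      have habs : |(c j - m) / n| ≤ 1 := by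
        rw [abs_div, abs_of_pos npos, div_le_one npos]
        exact le_trans (hu j) hn
      have h1 := exp_quad habs
      have h2 : (3/4) * ((c j - m) / n) ^ 2 ≤ B / n ^ 2 := by
        have hsq : (c j - m) ^ 2 ≤ 4 * M ^ 2 := by
          nlinarith [hu j, abs_nonneg (c j - m), sq_abs (c j - m)]
        rw [hB, div_pow,
          show (3:ℝ)/4 * ((c j - m) ^ 2 / (n:ℝ) ^ 2) = (3/4 * (c j - m) ^ 2) / (n:ℝ) ^ 2 by ring]
        refine div_le_div_of_nonneg_right ?_ (by positivity) |>.trans_eq rfl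
        nlinarith
      linarith
    calc Q ≤ ∑ j, s j * (1 + (c j - m) / n + B / n ^ 2) :=
          Finset.sum_le_sum fun j _ => mul_le_mul_of_nonneg_left (hterm j) (hs0 j)
    _ = 1 + B / n ^ 2 := by
        simp only [mul_add, mul_one]
        rw [Finset.sum_add_distrib, Finset.sum_add_distrib, hs1, h0, ← Finset.sum_mul, hs1]
        ring
  set S := ∑ j, s j * Real.exp (c j / n) with hSdef
  have hexp_pow : Real.exp (m / n) ^ n = Real.exp m := by
    rw [← Real.exp_nat_mul, mul_div_cancel₀ _ (ne_of_gt npos)]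
  have hlow : Real.exp m ≤ S ^ n := by
    have h1 : Real.exp (m / n) ≤ S := by
      rw [hS]; exact le_mul_of_one_le_right (Real.exp_pos _).le hQ1
    calc Real.exp m = Real.exp (m / n) ^ n := hexp_pow.symm
    _ ≤ S ^ n := pow_le_pow_left₀ (Real.exp_pos _).le h1 n
  have hSpos : 0 ≤ S := le_trans (Real.exp_pos (m/n)).le
    (by rw [hS]; exact le_mul_of_one_le_right (Real.exp_pos _).le hQ1)
  have hupp : S ^ n ≤ Real.exp m * Real.exp (B / n) := by
    have h1 : S ≤ Real.exp (m / n) * (1 + B / n ^ 2) := by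
      rw [hS]; exact mul_le_mul_of_nonneg_left hQ2 (Real.exp_pos _).le
    have h2 : (1 + B / n ^ 2) ≤ Real.exp (B / n ^ 2) := by
      linarith [Real.add_one_le_exp (B / (n:ℝ) ^ 2)]
    have h3 : Real.exp (B / n ^ 2) ^ n = Real.exp (B / n) := by
      rw [← Real.exp_nat_mul]
      congr 1
      field_simp
    calc S ^ n ≤ (Real.exp (m / n) * (1 + B / n ^ 2)) ^ n := pow_le_pow_left₀ hSpos h1 n
    _ = Real.exp (m / n) ^ n * (1 + B / n ^ 2) ^ n := mul_pow _ _ _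
    _ ≤ Real.exp m * Real.exp (B / n) := by
        rw [hexp_pow, ← h3]
        refine mul_le_mul_of_nonneg_left (pow_le_pow_left₀ (by positivity) h2 n) (Real.exp_pos _).le
  have hBn : B / (n:ℝ) ≤ B := div_le_self B0 hn'
  have he1 : Real.exp (B / n) - 1 ≤ (B / n) * Real.exp (B / n) := exp_sub_one_le
  have he2 : Real.exp (B / n) ≤ Real.exp B := Real.exp_le_exp.mpr hBn
  rw [abs_of_nonneg (by linarith : (0:ℝ) ≤ S ^ n - Real.exp m)]
  have hem := Real.exp_pos m
  have hBn0 : 0 ≤ B / (n:ℝ) := by positivity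
  have step : S ^ n - Real.exp m ≤ Real.exp m * ((B / n) * Real.exp B) := by
    have p1 : Real.exp m * (Real.exp (B / n) - 1) ≤ Real.exp m * ((B / n) * Real.exp (B / n)) :=
      mul_le_mul_of_nonneg_left he1 hem.le
    have p2 : (B / n) * Real.exp (B / n) ≤ (B / n) * Real.exp B :=
      mul_le_mul_of_nonneg_left he2 hBn0
    have p3 : Real.exp m * ((B / n) * Real.exp (B / n)) ≤ Real.exp m * ((B / n) * Real.exp B) :=
      mul_le_mul_of_nonneg_left p2 hem.le
    nlinarith [hupp, p1, p3]
  calc S ^ n - Real.exp m ≤ Real.exp m * ((B / n) * Real.exp B) := step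
  _ = B * Real.exp B / n * Real.exp m := by ring

/-- the functions `e_{a,n}(y) = (∑ⱼ sⱼ(y) exp (a ⬝ xⱼ / n))ⁿ` converge
uniformly on `T` to `exp (a ⬝ y)`, with error bound
`sup_{y∈T} |e_{a,n}(y) − exp (a⬝y)| ≤ (K/n + C/n²) ⨆_{z∈T} exp (a⬝z)` for large `n`. -/
theorem stmt13 {D : ℕ} (x : Fin (D + 1) → (Fin D → ℝ)) (hx : AffineIndependent ℝ x)
    (T : Set (Fin D → ℝ)) (hT : T = convexHull ℝ (Set.range x))
    (s : (Fin D → ℝ) → Fin (D + 1) → ℝ)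
    (hs_sum : ∀ y ∈ T, ∑ j, s y j = 1)
    (hs_nonneg : ∀ y ∈ T, ∀ j, 0 ≤ s y j)
    (hs_rep : ∀ y ∈ T, ∑ j, s y j • x j = y)
    (a : Fin D → ℝ) :
    TendstoUniformlyOn
      (fun (n : ℕ) (y : Fin D → ℝ) => (∑ j, s y j * Real.exp (dotp a (x j) / n)) ^ n)
      (fun y => Real.exp (dotp a y)) Filter.atTop T ∧
    ∃ (K C : ℝ) (N : ℕ), ∀ n : ℕ, N ≤ n → ∀ y ∈ T,
      |(∑ j, s y j * Real.exp (dotp a (x j) / n)) ^ n - Real.exp (dotp a y)| ≤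
        (K / n + C / (n : ℝ) ^ 2) * ⨆ z : T, Real.exp (dotp a z) := by
  classical
  set c : Fin (D + 1) → ℝ := fun j => dotp a (x j) with hc
  set M : ℝ := ∑ j, |c j| with hMdef
  have hM : ∀ j, |c j| ≤ M :=
    fun j => Finset.single_le_sum (f := fun j => |c j|) (fun i _ => abs_nonneg _) (mem_univ j)
  have M0 : (0:ℝ) ≤ M := le_trans (abs_nonneg _) (hM 0)
  have hdot : ∀ y ∈ T, dotp a y = ∑ j, s y j * c j := by
    intro y hy
    conv_lhs => rw [← hs_rep y hy]
    simp only [hc, dotp, Finset.sum_apply, Pi.smul_apply, smul_eq_mul, Finset.mul_sum]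
    rw [Finset.sum_comm]
    exact Finset.sum_congr rfl fun j _ => Finset.sum_congr rfl fun i _ => by ring
  have hub : ∀ y ∈ T, Real.exp (dotp a y) ≤ Real.exp M := by
    intro y hy
    rw [Real.exp_le_exp, hdot y hy]
    calc ∑ j, s y j * c j ≤ ∑ j, s y j * M := by
          refine Finset.sum_le_sum fun j _ => ?_
          exact mul_le_mul_of_nonneg_left (le_trans (le_abs_self _) (hM j)) (hs_nonneg y hy j)
    _ = M := by rw [← Finset.sum_mul, hs_sum y hy, one_mul]
  have hx0 : x 0 ∈ T := by
    rw [hT]; exact subset_convexHull ℝ _ ⟨0, rfl⟩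
  have bdd : BddAbove (Set.range fun z : T => Real.exp (dotp a z)) := by
    refine ⟨Real.exp M, ?_⟩
    rintro _ ⟨z, rfl⟩
    exact hub z z.2
  have hle_sup : ∀ y ∈ T, Real.exp (dotp a y) ≤ ⨆ z : T, Real.exp (dotp a z) := by
    intro y hy
    exact le_ciSup bdd (⟨y, hy⟩ : T)
  set K : ℝ := 3 * M ^ 2 * Real.exp (3 * M ^ 2) with hK
  have K0 : 0 ≤ K := by positivity
  set N : ℕ := ⌈2 * M⌉₊ + 1 with hN
  have hmain : ∀ n : ℕ, N ≤ n → ∀ y ∈ T,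
      |(∑ j, s y j * Real.exp (dotp a (x j) / n)) ^ n - Real.exp (dotp a y)| ≤
        K / n * ⨆ z : T, Real.exp (dotp a z) := by
    intro n hn y hy
    have hn1 : 1 ≤ n := le_trans (Nat.le_add_left 1 _) hn
    have hn2 : 2 * M ≤ (n:ℝ) := by
      calc 2 * M ≤ (⌈2 * M⌉₊ : ℝ) := Nat.le_ceil _
      _ ≤ (n:ℝ) := by exact_mod_cast le_trans (Nat.le_succ _) hn
    have hkey := key (s y) c M (hs_nonneg y hy) (hs_sum y hy) hM n hn1 hn2
    rw [hdot y hy]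
    refine le_trans hkey ?_
    rw [← hdot y hy]
    have hnr : (0:ℝ) < n := by exact_mod_cast hn1
    refine mul_le_mul_of_nonneg_left (hle_sup y hy) ?_
    positivity
  constructor
  · rw [Metric.tendstoUniformlyOn_iff]
    intro ε hε
    set Ssup := ⨆ z : T, Real.exp (dotp a z) with hSsup
    have hTend : Filter.Tendsto (fun n : ℕ => K * Ssup / n) Filter.atTop (nhds 0) :=
      tendsto_const_div_atTop_nhds_zero_nat _
    have hEv : ∀ᶠ n : ℕ in Filter.atTop, K * Ssup / n < ε :=
      hTend.eventually (gt_mem_nhds hε)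
    filter_upwards [hEv, Filter.eventually_ge_atTop N] with n h1 h2 y hy
    rw [Real.dist_eq]
    have := hmain n h2 y hy
    rw [abs_sub_comm] at this
    calc |Real.exp (dotp a y) - (∑ j, s y j * Real.exp (dotp a (x j) / n)) ^ n| ≤
        K / n * Ssup := this
    _ = K * Ssup / n := by ring
    _ < ε := h1
  · refine ⟨K, 0, N, fun n hn y hy => ?_⟩
    have := hmain n hn y hy
    calc |(∑ j, s y j * Real.exp (dotp a (x j) / n)) ^ n - Real.exp (dotp a y)| ≤
        K / n * ⨆ z : T, Real.exp (dotp a z) := this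
    _ = (K / n + 0 / (n:ℝ) ^ 2) * ⨆ z : T, Real.exp (dotp a z) := by
        rw [zero_div, add_zero]
end

section
/- Main theorem: for every continuous function f : T → ℝ on a nondegenerate D-dimensional simplex T, lim_{n→∞} sup_{x∈T} |f(x) − B_n(f; x)| = 0; i.e., the Bernstein–Bézier polynomials of f converge uniformly to f on T. -/
open Finset

namespace Stmt16Aux

variable {D : ℕ}

/-- unit multi-index -/
def e (j : Fin (D + 1)) : Fin (D + 1) → ℕ := fun i => if i = j then 1 else 0

lemma e_apply (j i : Fin (D + 1)) : e j i = if i = j then 1 else 0 := rfl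

lemma sum_e (j : Fin (D + 1)) : ∑ i, e j i = 1 := by
  simp [e]

lemma add_e_apply (k : Fin (D + 1) → ℕ) (j i : Fin (D + 1)) :
    (k + e j) i = if i = j then k i + 1 else k i := by
  by_cases h : i = j <;> simp [e, h]

lemma sum_add_e (k : Fin (D + 1) → ℕ) (j : Fin (D + 1)) :
    ∑ i, (k + e j) i = (∑ i, k i) + 1 := by
  simp only [Pi.add_apply, Finset.sum_add_distrib, sum_e]

/-- Weight of a multi-index. -/
noncomputable def W (p : Fin (D + 1) → ℝ) (k : Fin (D + 1) → ℕ) : ℝ :=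
  (Nat.multinomial Finset.univ k : ℝ) * ∏ i, p i ^ k i

lemma W_nonneg {p : Fin (D + 1) → ℝ} (hp : ∀ i, 0 ≤ p i) (k : Fin (D + 1) → ℕ) :
    0 ≤ W p k :=
  mul_nonneg (Nat.cast_nonneg _) (Finset.prod_nonneg fun i _ => pow_nonneg (hp i) _)

lemma sumW {p : Fin (D + 1) → ℝ} (hp1 : ∑ i, p i = 1) (n : ℕ) :
    ∑ k ∈ piAntidiag (univ : Finset (Fin (D + 1))) n, W p k = 1 := by
  have h := Finset.sum_pow_eq_sum_piAntidiag (univ : Finset (Fin (D + 1))) p n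
  rw [hp1, one_pow] at h
  exact h.symm

lemma mult_succ (k : Fin (D + 1) → ℕ) (j : Fin (D + 1)) :
    (k j + 1) * Nat.multinomial Finset.univ (k + e j) =
      (∑ i, k i + 1) * Nat.multinomial Finset.univ k := by
  have hpos : 0 < ∏ i, (k i).factorial :=
    Finset.prod_pos fun i _ => (k i).factorial_pos
  have hprod : ∏ i, ((k + e j) i).factorial = (k j + 1) * ∏ i, (k i).factorial := by
    have hfun : (fun i => ((k + e j) i).factorial) =
        Function.update (fun i => (k i).factorial) j ((k j + 1).factorial) := by
      funext i
      by_cases h : i = j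
      · subst h; simp [e]
      · simp [Function.update_of_ne h, e, h]
    rw [hfun, Finset.prod_update_of_mem (mem_univ j)]
    rw [Nat.factorial_succ, mul_assoc]
    congr 1
    rw [Finset.sdiff_singleton_eq_erase]
    exact Finset.mul_prod_erase univ (fun i => (k i).factorial) (mem_univ j)
  apply Nat.eq_of_mul_eq_mul_left hpos
  calc (∏ i, (k i).factorial) * ((k j + 1) * Nat.multinomial Finset.univ (k + e j))
      = (∏ i, ((k + e j) i).factorial) * Nat.multinomial Finset.univ (k + e j) := by
        rw [hprod]; ring
    _ = (∑ i, (k + e j) i).factorial := Nat.multinomial_spec _ _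
    _ = (∑ i, k i + 1).factorial := by rw [sum_add_e]
    _ = (∑ i, k i + 1) * (∑ i, k i).factorial := Nat.factorial_succ _
    _ = (∑ i, k i + 1) * ((∏ i, (k i).factorial) * Nat.multinomial Finset.univ k) := by
        rw [Nat.multinomial_spec]
    _ = (∏ i, (k i).factorial) * ((∑ i, k i + 1) * Nat.multinomial Finset.univ k) := by ring

lemma prod_pow_succ (p : Fin (D + 1) → ℝ) (k : Fin (D + 1) → ℕ) (j : Fin (D + 1)) :
    ∏ i, p i ^ ((k + e j) i) = p j * ∏ i, p i ^ k i := by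
  have h : ∀ i, p i ^ ((k + e j) i) = p i ^ k i * (if i = j then p i else 1) := by
    intro i
    by_cases h : i = j
    · subst h; rw [add_e_apply]; simp [pow_succ]
    · rw [add_e_apply]; simp [h]
  rw [Finset.prod_congr rfl fun i _ => h i, Finset.prod_mul_distrib,
    Finset.prod_ite_eq' univ j p]
  simp [mul_comm]

lemma sub_add_e (k : Fin (D + 1) → ℕ) (j : Fin (D + 1)) (hj : k j ≠ 0) :
    (k - e j) + e j = k := by
  funext i
  by_cases h : i = j
  · subst h
    simp [e, Nat.sub_add_cancel (Nat.one_le_iff_ne_zero.2 hj)]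
  · simp [e, h]

lemma shift (p : Fin (D + 1) → ℝ) (j : Fin (D + 1)) (n : ℕ) (g : (Fin (D + 1) → ℕ) → ℝ) :
    ∑ k ∈ piAntidiag (univ : Finset (Fin (D + 1))) (n + 1), (k j : ℝ) * W p k * g k =
      ((n : ℝ) + 1) * p j *
        ∑ k ∈ piAntidiag (univ : Finset (Fin (D + 1))) n, W p k * g (k + e j) := by
  classical
  rw [mul_sum]
  rw [← Finset.sum_filter_of_ne (p := fun k => k j ≠ 0)
    (fun k _ hne h0 => hne (by simp [h0]))]
  refine Finset.sum_nbij' (fun k => k - e j) (fun k => k + e j) ?_ ?_ ?_ ?_ ?_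
  · intro k hk
    simp only [Finset.mem_filter, mem_piAntidiag] at hk ⊢
    obtain ⟨⟨hsum, -⟩, hj⟩ := hk
    refine ⟨?_, fun i _ => mem_univ i⟩
    have hsum' : ∑ i, k i = n + 1 := hsum
    have h2 : ∑ i, ((k - e j) + e j) i = n + 1 := by rw [sub_add_e k j hj]; exact hsum'
    rw [sum_add_e] at h2
    show ∑ i, (k - e j) i = n
    omega
  · intro k hk
    simp only [Finset.mem_filter, mem_piAntidiag] at hk ⊢
    obtain ⟨hsum, -⟩ := hk
    have hsum' : ∑ i, k i = n := hsum
    refine ⟨⟨?_, fun i _ => mem_univ i⟩, ?_⟩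
    · show ∑ i, (k + e j) i = n + 1
      rw [sum_add_e, hsum']
    · simp [e]
  · intro k hk
    simp only [Finset.mem_filter, mem_piAntidiag] at hk
    exact sub_add_e k j hk.2
  · intro k _
    funext i
    by_cases h : i = j <;> simp [e, h]
  · intro k hk
    simp only [Finset.mem_filter, mem_piAntidiag] at hk
    obtain ⟨⟨hsum, -⟩, hj⟩ := hk
    set k' := k - e j with hk'
    have hrec : k' + e j = k := sub_add_e k j hj
    have hsumk : ∑ i, k i = n + 1 := hsum
    have hsum' : ∑ i, k' i = n := by
      have h2 : ∑ i, (k' + e j) i = n + 1 := by rw [hrec]; exact hsumk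
      rw [sum_add_e] at h2
      omega
    have hmult := mult_succ k' j
    rw [hrec, hsum'] at hmult
    have hkj : k j = k' j + 1 := by
      have h3 := congrFun hrec j
      simp only [Pi.add_apply] at h3
      rw [e_apply, if_pos rfl] at h3
      omega
    have hmultR : (k j : ℝ) * (Nat.multinomial Finset.univ k : ℝ) =
        ((n : ℝ) + 1) * (Nat.multinomial Finset.univ k' : ℝ) := by
      have hc := congrArg (fun m : ℕ => (m : ℝ)) hmult
      push_cast at hc
      rw [hkj]
      push_cast
      linarith [hc]
    have hprod : ∏ i, p i ^ k i = p j * ∏ i, p i ^ k' i := by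
      rw [← hrec]; exact prod_pow_succ p k' j
    rw [show g k = g (k' + e j) from by rw [hrec]]
    unfold W
    rw [hprod]
    rw [show (k j : ℝ) * ((Nat.multinomial Finset.univ k : ℝ) * (p j * ∏ i, p i ^ k' i)) *
          g (k' + e j)
        = ((k j : ℝ) * (Nat.multinomial Finset.univ k : ℝ)) * (p j * ∏ i, p i ^ k' i) *
          g (k' + e j) from by ring,
      hmultR]
    ring

lemma moment1 {p : Fin (D + 1) → ℝ} (hp1 : ∑ i, p i = 1) (j : Fin (D + 1)) (n : ℕ) :
    ∑ k ∈ piAntidiag (univ : Finset (Fin (D + 1))) n, (k j : ℝ) * W p k = (n : ℝ) * p j := by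
  cases n with
  | zero => simp [piAntidiag_zero]
  | succ m =>
    have h := shift p j m (fun _ => 1)
    simp only [mul_one] at h
    rw [h, sumW hp1]
    push_cast
    ring

lemma moment2 {p : Fin (D + 1) → ℝ} (hp1 : ∑ i, p i = 1) (j : Fin (D + 1)) (n : ℕ) :
    ∑ k ∈ piAntidiag (univ : Finset (Fin (D + 1))) n,
        (k j : ℝ) * ((k j : ℝ) - 1) * W p k = (n : ℝ) * ((n : ℝ) - 1) * p j ^ 2 := by
  cases n with
  | zero => simp [piAntidiag_zero]
  | succ m =>
    have h := shift p j m (fun k => (k j : ℝ) - 1)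
    rw [show ∑ k ∈ piAntidiag (univ : Finset (Fin (D + 1))) (m + 1),
          (k j : ℝ) * ((k j : ℝ) - 1) * W p k
        = ∑ k ∈ piAntidiag (univ : Finset (Fin (D + 1))) (m + 1),
          (k j : ℝ) * W p k * ((k j : ℝ) - 1) from
        Finset.sum_congr rfl fun k _ => by ring,
      h]
    have h2 : ∀ k : Fin (D + 1) → ℕ, (((k + e j) j : ℝ) - 1) = (k j : ℝ) := by
      intro k
      rw [add_e_apply]
      simp
    rw [show ∑ k ∈ piAntidiag (univ : Finset (Fin (D + 1))) m,
          W p k * (((k + e j) j : ℝ) - 1)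
        = ∑ k ∈ piAntidiag (univ : Finset (Fin (D + 1))) m, (k j : ℝ) * W p k from
        Finset.sum_congr rfl fun k _ => by rw [h2 k]; ring,
      moment1 hp1 j m]
    push_cast
    ring

lemma variance {p : Fin (D + 1) → ℝ} (hp0 : ∀ i, 0 ≤ p i) (hp1 : ∑ i, p i = 1)
    (j : Fin (D + 1)) (n : ℕ) :
    ∑ k ∈ piAntidiag (univ : Finset (Fin (D + 1))) n,
        ((k j : ℝ) - n * p j) ^ 2 * W p k = (n : ℝ) * p j * (1 - p j) := by
  have expand : ∀ k : Fin (D + 1) → ℕ,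
      ((k j : ℝ) - n * p j) ^ 2 * W p k =
        (k j : ℝ) * ((k j : ℝ) - 1) * W p k +
          (1 - 2 * ((n : ℝ) * p j)) * ((k j : ℝ) * W p k) +
          ((n : ℝ) * p j) ^ 2 * W p k := fun k => by ring
  rw [Finset.sum_congr rfl fun k _ => expand k]
  rw [Finset.sum_add_distrib, Finset.sum_add_distrib, ← Finset.mul_sum, ← Finset.mul_sum,
    moment2 hp1 j n, moment1 hp1 j n, sumW hp1]
  ring

end Stmt16Aux

set_option maxHeartbeats 1000000 in
open Stmt16Aux in
/-- main theorem: for every continuous `f : T → ℝ` on a nondegenerate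
`D`-simplex `T`, the Bernstein–Bézier polynomials `B_n(f; ·)` converge uniformly to `f`
on `T`: `lim_{n→∞} sup_{y∈T} |f(y) − B_n(f; y)| = 0`. -/
theorem stmt16 {D : ℕ} (x : Fin (D + 1) → (Fin D → ℝ)) (hx : AffineIndependent ℝ x)
    (T : Set (Fin D → ℝ)) (hT : T = convexHull ℝ (Set.range x))
    (s : (Fin D → ℝ) → Fin (D + 1) → ℝ)
    (hs_cont : ContinuousOn s T)
    (hs_sum : ∀ y ∈ T, ∑ j, s y j = 1)
    (hs_nonneg : ∀ y ∈ T, ∀ j, 0 ≤ s y j)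
    (hs_rep : ∀ y ∈ T, ∑ j, s y j • x j = y)
    (f : (Fin D → ℝ) → ℝ) (hf : ContinuousOn f T) :
    TendstoUniformlyOn (fun n => bezier x s f n) f Filter.atTop T := by
  classical
  rw [Metric.tendstoUniformlyOn_iff]
  intro ε hε
  have hTc : IsCompact T := hT ▸ (Set.finite_range x).isCompact_convexHull (𝕜 := ℝ)
  obtain ⟨M, hM⟩ := hTc.exists_bound_of_continuousOn hf
  have huc : UniformContinuousOn f T := hTc.uniformContinuousOn_of_continuous hf
  rw [Metric.uniformContinuousOn_iff] at huc
  obtain ⟨δ, hδ0, hδ⟩ := huc (ε / 2) (by positivity)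
  set C : ℝ := (∑ j, ‖x j‖) + 1 with hCdef
  have hC0 : 0 < C := by positivity
  set c : ℝ := 2 * |M| * (C / δ) ^ 2 * ((D : ℝ) + 1) / 4 with hcdef
  have hc : Filter.Tendsto (fun n : ℕ => c / n) Filter.atTop (nhds 0) :=
    tendsto_const_div_atTop_nhds_zero_nat c
  have h1 : ∀ᶠ n : ℕ in Filter.atTop, c / n < ε / 2 :=
    hc.eventually_lt_const (by positivity)
  filter_upwards [h1, Filter.eventually_ge_atTop 1] with n hn hn1
  intro y hyT
  have hp0 : ∀ i, 0 ≤ s y i := hs_nonneg y hyT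
  have hp1 : ∑ i, s y i = 1 := hs_sum y hyT
  set p : Fin (D + 1) → ℝ := s y with hpdef
  have hn0 : (0 : ℝ) < n := by exact_mod_cast hn1
  set K := piAntidiag (univ : Finset (Fin (D + 1))) n with hK
  set xk : (Fin (D + 1) → ℕ) → (Fin D → ℝ) := fun k => ∑ j, ((k j : ℝ) / n) • x j with hxk
  have hxkT : ∀ k ∈ K, xk k ∈ T := by
    intro k hk
    rw [mem_piAntidiag] at hk
    rw [hT]
    refine Convex.sum_mem (convex_convexHull ℝ _) (fun j _ => by positivity) ?_
      (fun j _ => subset_convexHull ℝ _ ⟨j, rfl⟩)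
    have : (∑ i, (k i : ℝ)) = (n : ℝ) := by exact_mod_cast congrArg (Nat.cast (R := ℝ)) hk.1
    rw [← Finset.sum_div, this, div_self (ne_of_gt hn0)]
  have hWsum := sumW (p := p) hp1 n
  have hB : bezier x s f n y = ∑ k ∈ K, f (xk k) * W p k := rfl
  have hrepr : f y - bezier x s f n y = ∑ k ∈ K, (f y - f (xk k)) * W p k := by
    have : ∑ k ∈ K, (f y - f (xk k)) * W p k
        = (∑ k ∈ K, f y * W p k) - ∑ k ∈ K, f (xk k) * W p k := by
      rw [← Finset.sum_sub_distrib]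
      exact Finset.sum_congr rfl fun k _ => by ring
    rw [this, ← Finset.mul_sum, hWsum, mul_one, hB]
  -- per-term bound
  have hterm : ∀ k ∈ K, |f y - f (xk k)| ≤
      ε / 2 + 2 * |M| * (C / δ) ^ 2 * ∑ j, ((k j : ℝ) / n - p j) ^ 2 := by
    intro k hk
    have hxkT' := hxkT k hk
    set S : ℝ := ∑ j, ((k j : ℝ) / n - p j) ^ 2 with hSdef
    have hS0 : 0 ≤ S := Finset.sum_nonneg fun j _ => sq_nonneg _
    have hdist : dist y (xk k) ≤ C * Real.sqrt S := by
      rw [dist_eq_norm]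
      have hy : y = ∑ j, p j • x j := (hs_rep y hyT).symm
      have hdiff : y - xk k = ∑ j, (p j - (k j : ℝ) / n) • x j := by
        rw [hy, hxk, ← Finset.sum_sub_distrib]
        exact Finset.sum_congr rfl fun j _ => (sub_smul _ _ _).symm
      rw [hdiff]
      calc ‖∑ j, (p j - (k j : ℝ) / n) • x j‖ ≤ ∑ j, ‖(p j - (k j : ℝ) / n) • x j‖ :=
            norm_sum_le _ _
        _ = ∑ j, |p j - (k j : ℝ) / n| * ‖x j‖ := by
            exact Finset.sum_congr rfl fun j _ => by rw [norm_smul, Real.norm_eq_abs]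
        _ ≤ ∑ j, Real.sqrt S * ‖x j‖ := by
            refine Finset.sum_le_sum fun j _ => ?_
            refine mul_le_mul_of_nonneg_right ?_ (norm_nonneg _)
            rw [abs_sub_comm]
            refine Real.abs_le_sqrt ?_
            exact Finset.single_le_sum (fun i _ => sq_nonneg ((k i : ℝ) / n - p i)) (mem_univ j)
        _ = (∑ j, ‖x j‖) * Real.sqrt S := by rw [← Finset.mul_sum, mul_comm]
        _ ≤ C * Real.sqrt S := by
            refine mul_le_mul_of_nonneg_right ?_ (Real.sqrt_nonneg _)
            rw [hCdef]; linarith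
    by_cases hcase : dist y (xk k) < δ
    · have h2 := hδ y hyT (xk k) hxkT' hcase
      rw [Real.dist_eq] at h2
      have h3 : 0 ≤ 2 * |M| * (C / δ) ^ 2 * S := by positivity
      linarith
    · push_neg at hcase
      have hsq : δ ^ 2 ≤ C ^ 2 * S := by
        have h4 : δ ≤ C * Real.sqrt S := le_trans hcase hdist
        have h5 : (C * Real.sqrt S) ^ 2 = C ^ 2 * S := by
          rw [mul_pow, Real.sq_sqrt hS0]
        nlinarith [Real.sqrt_nonneg S, hδ0]
      have hS1 : (1 : ℝ) ≤ (C / δ) ^ 2 * S := by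
        rw [div_pow]
        rw [div_mul_eq_mul_div, le_div_iff₀ (by positivity)]
        linarith
      have hfy : |f y| ≤ |M| := le_trans (hM y hyT) (le_abs_self M)
      have hfxk : |f (xk k)| ≤ |M| := le_trans (hM _ hxkT') (le_abs_self M)
      have h6 : |f y - f (xk k)| ≤ 2 * |M| := by
        calc |f y - f (xk k)| ≤ |f y| + |f (xk k)| := abs_sub _ _
          _ ≤ 2 * |M| := by linarith
      nlinarith [abs_nonneg M, hε.le]
  -- variance bound per coordinate
  have hvar : ∀ j : Fin (D + 1), ∑ k ∈ K, ((k j : ℝ) / n - p j) ^ 2 * W p k ≤ 1 / (4 * n) := by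
    intro j
    have hv := variance hp0 hp1 j n
    have heq : ∑ k ∈ K, ((k j : ℝ) / n - p j) ^ 2 * W p k =
        (1 / (n : ℝ) ^ 2) * ∑ k ∈ K, ((k j : ℝ) - n * p j) ^ 2 * W p k := by
      rw [Finset.mul_sum]
      refine Finset.sum_congr rfl fun k _ => ?_
      have : ((k j : ℝ) / n - p j) = ((k j : ℝ) - n * p j) / n := by
        field_simp
      rw [this, div_pow]
      field_simp
    rw [heq, hv]
    have hpj1 : p j ≤ 1 := by
      rw [← hp1]
      exact Finset.single_le_sum (fun i _ => hp0 i) (mem_univ j)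
    have hq : (n : ℝ) * p j * (1 - p j) ≤ (n : ℝ) * (1 / 4) := by
      nlinarith [mul_nonneg hn0.le (sq_nonneg (p j - 1 / 2))]
    rw [show (1 : ℝ) / (4 * n) = 1 / (n : ℝ) ^ 2 * ((n : ℝ) * (1 / 4)) from by
      field_simp]
    exact mul_le_mul_of_nonneg_left hq (by positivity)
  -- assemble
  have hmid : ∑ k ∈ K, (∑ j, ((k j : ℝ) / n - p j) ^ 2) * W p k ≤
      ((D : ℝ) + 1) * (1 / (4 * n)) := by
    have hsw : ∑ k ∈ K, (∑ j, ((k j : ℝ) / n - p j) ^ 2) * W p k =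
        ∑ j, ∑ k ∈ K, ((k j : ℝ) / n - p j) ^ 2 * W p k := by
      rw [show ∑ k ∈ K, (∑ j, ((k j : ℝ) / n - p j) ^ 2) * W p k
          = ∑ k ∈ K, ∑ j, ((k j : ℝ) / n - p j) ^ 2 * W p k from
          Finset.sum_congr rfl fun k _ => Finset.sum_mul _ _ _]
      exact Finset.sum_comm
    rw [hsw]
    calc ∑ j, ∑ k ∈ K, ((k j : ℝ) / n - p j) ^ 2 * W p k
        ≤ ∑ _j : Fin (D + 1), 1 / (4 * (n : ℝ)) := Finset.sum_le_sum fun j _ => hvar j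
      _ = ((D : ℝ) + 1) * (1 / (4 * n)) := by
          rw [Finset.sum_const, Finset.card_univ, Fintype.card_fin, nsmul_eq_mul]
          push_cast
          ring
  rw [Real.dist_eq]
  have h8 : 0 ≤ 2 * |M| * (C / δ) ^ 2 := by positivity
  calc |f y - bezier x s f n y| = |∑ k ∈ K, (f y - f (xk k)) * W p k| := by rw [hrepr]
    _ ≤ ∑ k ∈ K, |(f y - f (xk k)) * W p k| := Finset.abs_sum_le_sum_abs _ _
    _ = ∑ k ∈ K, |f y - f (xk k)| * W p k := by
        exact Finset.sum_congr rfl fun k _ => by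
          rw [abs_mul, abs_of_nonneg (W_nonneg hp0 k)]
    _ ≤ ∑ k ∈ K, (ε / 2 + 2 * |M| * (C / δ) ^ 2 * ∑ j, ((k j : ℝ) / n - p j) ^ 2) * W p k :=
        Finset.sum_le_sum fun k hk =>
          mul_le_mul_of_nonneg_right (hterm k hk) (W_nonneg hp0 k)
    _ = ε / 2 * ∑ k ∈ K, W p k +
          2 * |M| * (C / δ) ^ 2 * ∑ k ∈ K, (∑ j, ((k j : ℝ) / n - p j) ^ 2) * W p k := by
        rw [Finset.mul_sum, Finset.mul_sum, ← Finset.sum_add_distrib]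
        exact Finset.sum_congr rfl fun k _ => by ring
    _ = ε / 2 + 2 * |M| * (C / δ) ^ 2 * ∑ k ∈ K, (∑ j, ((k j : ℝ) / n - p j) ^ 2) * W p k := by
        rw [hWsum, mul_one]
    _ ≤ ε / 2 + 2 * |M| * (C / δ) ^ 2 * (((D : ℝ) + 1) * (1 / (4 * n))) := by
        have := mul_le_mul_of_nonneg_left hmid h8
        linarith
    _ = ε / 2 + c / n := by
        rw [hcdef]
        field_simp
    _ < ε := by linarith
end
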